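/- Let f : ℂ → ℂ be a transcendental entire function. Suppose that for every sequence (a_n) of positive reals with a_n → ∞ for which there exists λ > 0 with a_{n+1} ≤ λ·M(a_n, f) for all n ≥ 1, there exist ζ ∈ ℂ and C > 1 such that a_n ≤ |f^n(ζ)| ≤ C·a_n for all n ≥ 1. Then there exist constants L' > 1 and s ∈ (0,1) and a sequence (x'_n) of points of ℂ with |x'_n| → ∞ such that, for all n ≥ 1, |x'_{n+1}| ≤ L'·|x'_n| and |f(x'_n)| ≤ M(|x'_n|, f)^s. -/

import Mathlib

open Filter Topology
set_option maxHeartbeats 1000000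

/-- The maximum modulus of `f` on the circle of radius `r` about the origin. -/
noncomputable def maxMod (f : ℂ → ℂ) (r : ℝ) : ℝ :=
  sSup ((fun z => ‖f z‖) '' Metric.sphere (0 : ℂ) r)

lemma maxMod_bddAbove (f : ℂ → ℂ) (hf : Differentiable ℂ f) (r : ℝ) :
    BddAbove ((fun z => ‖f z‖) '' Metric.sphere (0 : ℂ) r) :=
  ((isCompact_sphere (0:ℂ) r).image (continuous_norm.comp hf.continuous)).bddAbove

lemma le_maxMod (f : ℂ → ℂ) (hf : Differentiable ℂ f) {r : ℝ} {z : ℂ}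
    (hz : z ∈ Metric.sphere (0:ℂ) r) : ‖f z‖ ≤ maxMod f r :=
  le_csSup (maxMod_bddAbove f hf r) ⟨z, hz, rfl⟩

lemma maxMod_bound {f : ℂ → ℂ} (hf : Differentiable ℂ f) {r : ℝ} (hr : 0 < r)
    {z : ℂ} (hz : ‖z‖ ≤ r) : ‖f z‖ ≤ maxMod f r := by
  have key : ∀ w ∈ frontier (Metric.ball (0:ℂ) r), ‖f w‖ ≤ maxMod f r := by
    intro w hw
    rw [frontier_ball 0 hr.ne'] at hw
    exact le_maxMod f hf hw
  have hcl : z ∈ closure (Metric.ball (0:ℂ) r) := by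
    rw [closure_ball 0 hr.ne']
    simpa [Metric.mem_closedBall, Complex.dist_eq] using hz
  exact Complex.norm_le_of_forall_mem_frontier_norm_le Metric.isBounded_ball
    hf.diffContOnCl key hcl

lemma maxMod_mono {f : ℂ → ℂ} (hf : Differentiable ℂ f) {r R : ℝ} (hr : 0 < r)
    (hR : r ≤ R) : maxMod f r ≤ maxMod f R := by
  apply csSup_le (((NormedSpace.sphere_nonempty (x := (0:ℂ))).2 hr.le).image _)
  rintro x ⟨w, hw, rfl⟩
  have : ‖w‖ = r := by simpa [Complex.dist_eq] using hw
  exact maxMod_bound hf (hr.trans_le hR) (by rw [this]; exact hR)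

lemma maxMod_nonneg {f : ℂ → ℂ} (hf : Differentiable ℂ f) {r : ℝ} (hr : 0 ≤ r) :
    0 ≤ maxMod f r := by
  have : ((r:ℂ)) ∈ Metric.sphere (0:ℂ) r := by
    simp [Complex.dist_eq, abs_of_nonneg hr]
  exact (norm_nonneg _).trans (le_maxMod f hf this)

/-- Cauchy estimate: the power-series coefficient bound gives a lower bound on maxMod. -/
lemma coeff_mul_pow_le_maxMod {f : ℂ → ℂ} (hf : Differentiable ℂ f) (m : ℕ) {R : ℝ}
    (hR : 0 < R) :
    ‖cauchyPowerSeries f 0 1 m (fun _ => 1)‖ * R ^ m ≤ maxMod f R := by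
  have h1 := hf.hasFPowerSeriesOnBall (R := 1) 0 one_pos
  have h2 := hf.hasFPowerSeriesOnBall (R := R.toNNReal) 0 (by simpa using hR)
  have hRR : ((R.toNNReal : ℝ)) = R := Real.coe_toNNReal R hR.le
  rw [NNReal.coe_one] at h1
  rw [hRR] at h2
  have heq : cauchyPowerSeries f 0 1 = cauchyPowerSeries f 0 R :=
    h1.hasFPowerSeriesAt.eq_formalMultilinearSeries h2.hasFPowerSeriesAt
  have hint : (2 * Real.pi)⁻¹ * ∫ θ : ℝ in (0)..2 * Real.pi, ‖f (circleMap 0 R θ)‖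
      ≤ maxMod f R := by
    have hle : ∫ θ : ℝ in (0)..2 * Real.pi, ‖f (circleMap 0 R θ)‖
        ≤ ∫ _ : ℝ in (0)..2 * Real.pi, maxMod f R := by
      apply intervalIntegral.integral_mono_on Real.two_pi_pos.le
      · exact ((hf.continuous.comp (continuous_circleMap 0 R)).norm).intervalIntegrable 0 (2*Real.pi)
      · exact intervalIntegrable_const
      · intro θ _
        exact le_maxMod f hf (circleMap_mem_sphere 0 hR.le θ)
    rw [intervalIntegral.integral_const, smul_eq_mul, sub_zero] at hle
    calc (2 * Real.pi)⁻¹ * ∫ θ : ℝ in (0)..2 * Real.pi, ‖f (circleMap 0 R θ)‖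
        ≤ (2 * Real.pi)⁻¹ * (2 * Real.pi * maxMod f R) := by
          apply mul_le_mul_of_nonneg_left hle (by positivity)
      _ = maxMod f R := by field_simp
  have hnorm : ‖cauchyPowerSeries f 0 R m‖ ≤ maxMod f R * (R⁻¹) ^ m := by
    refine (norm_cauchyPowerSeries_le f 0 R m).trans ?_
    rw [abs_of_pos hR]
    exact mul_le_mul_of_nonneg_right hint (by positivity)
  have hc : ‖cauchyPowerSeries f 0 1 m (fun _ => 1)‖
      ≤ ‖cauchyPowerSeries f 0 R m‖ := by
    rw [heq]
    calc ‖cauchyPowerSeries f 0 R m (fun _ => 1)‖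
        = ‖cauchyPowerSeries f 0 R m (fun _ => (1:ℂ))‖ := rfl
      _ ≤ ‖cauchyPowerSeries f 0 R m‖ * ∏ _i : Fin m, ‖(1:ℂ)‖ :=
          (cauchyPowerSeries f 0 R m).le_opNorm _
      _ = ‖cauchyPowerSeries f 0 R m‖ := by simp
  calc ‖cauchyPowerSeries f 0 1 m (fun _ => 1)‖ * R ^ m
      ≤ (maxMod f R * (R⁻¹)^m) * R ^ m :=
        mul_le_mul_of_nonneg_right (hc.trans hnorm) (by positivity)
    _ = maxMod f R := by
        rw [mul_assoc, inv_pow, inv_mul_cancel₀ (by positivity)]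
        exact mul_one _

/-- a transcendental entire function has a nonzero Taylor coefficient of index ≥ N. -/
lemma exists_coeff_ne_zero {f : ℂ → ℂ} (hf : Differentiable ℂ f)
    (htrans : ¬ ∃ p : Polynomial ℂ, ∀ z, f z = p.eval z) (N : ℕ) :
    ∃ m ≥ N, cauchyPowerSeries f 0 1 m (fun _ => 1) ≠ 0 := by
  by_contra h
  push_neg at h
  apply htrans
  have h1 := hf.hasFPowerSeriesOnBall (R := 1) 0 one_pos
  rw [NNReal.coe_one] at h1
  set p := cauchyPowerSeries f 0 (1:ℝ) with hp
  refine ⟨∑ i ∈ Finset.range N, Polynomial.C (p i (fun _ => 1)) * Polynomial.X ^ i, fun z => ?_⟩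
  have hz : z ∈ Metric.eball (0:ℂ) ⊤ := by simp
  have hsum : HasSum (fun n => p n fun _ => z) (f (0 + z)) := h1.hasSum (by simpa using hz)
  have hterm : ∀ n, (p n fun _ => z) = (p n fun _ => 1) * z ^ n := by
    intro n
    have : (p n fun _ : Fin n => z • (1:ℂ)) = (∏ _i : Fin n, z) • (p n fun _ => 1) :=
      (p n).map_smul_univ (fun _ => z) (fun _ => 1)
    simpa [smul_eq_mul, mul_comm] using this
  have hzero : ∀ n ∉ Finset.range N, (p n fun _ => z) = 0 := by
    intro n hn
    rw [hterm n, h n (by simpa using hn)]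
    ring
  have hsum2 : HasSum (fun n => p n fun _ => z)
      (∑ n ∈ Finset.range N, (p n fun _ => z)) :=
    hasSum_sum_of_ne_finset_zero hzero
  have := hsum.unique hsum2
  rw [zero_add] at this
  rw [this]
  simp only [Polynomial.eval_finset_sum, Polynomial.eval_mul, Polynomial.eval_C,
    Polynomial.eval_pow, Polynomial.eval_X]
  exact Finset.sum_congr rfl fun n _ => hterm n

theorem slow_escape_a_implies_c
    (f : ℂ → ℂ) (hf : Differentiable ℂ f)
    (htrans : ¬ ∃ p : Polynomial ℂ, ∀ z, f z = p.eval z)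
    (ha : ∀ a : ℕ → ℝ, (∀ n ≥ 1, 0 < a n) → Tendsto a atTop atTop →
      (∃ lam > (0 : ℝ), ∀ n ≥ 1, a (n + 1) ≤ lam * maxMod f (a n)) →
      ∃ (ζ : ℂ) (C : ℝ), 1 < C ∧
        ∀ n ≥ 1, a n ≤ ‖f^[n] ζ‖ ∧ ‖f^[n] ζ‖ ≤ C * a n) :
    ∃ L' > (1 : ℝ), ∃ s : ℝ, 0 < s ∧ s < 1 ∧ ∃ x' : ℕ → ℂ,
      Tendsto (fun n => ‖x' n‖) atTop atTop ∧
      ∀ n ≥ 1, ‖x' (n + 1)‖ ≤ L' * ‖x' n‖ ∧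
        ‖f (x' n)‖ ≤ maxMod f (‖x' n‖) ^ s := by
  -- a nonzero coefficient of index ≥ 3
  obtain ⟨m, hm3, hcm⟩ := exists_coeff_ne_zero hf htrans 3
  set c : ℝ := ‖cauchyPowerSeries f 0 1 m (fun _ => 1)‖ with hc
  have hcpos : 0 < c := by
    simpa [hc] using (norm_pos_iff.mpr hcm)
  have hgrow : ∀ R : ℝ, 0 < R → c * R ^ m ≤ maxMod f R := fun R hR =>
    coeff_mul_pow_le_maxMod hf m hR
  -- apply ha to a n = n
  have hlam : ∀ n ≥ 1, ((n+1 : ℕ) : ℝ) ≤ max 1 (2 / c) * maxMod f (n:ℝ) := by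
    intro n hn
    have hn1 : (1:ℝ) ≤ (n:ℝ) := by exact_mod_cast hn
    have hMn : c * (n:ℝ) ≤ maxMod f (n:ℝ) := by
      calc c * (n:ℝ) ≤ c * (n:ℝ) ^ m := by
            apply mul_le_mul_of_nonneg_left _ hcpos.le
            calc (n:ℝ) = (n:ℝ)^1 := (pow_one _).symm
              _ ≤ (n:ℝ)^m := pow_le_pow_right₀ hn1 (by omega)
        _ ≤ maxMod f (n:ℝ) := hgrow _ (by linarith)
    have h2 : ((n+1 : ℕ) : ℝ) ≤ (2/c) * (c * (n:ℝ)) := by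
      push_cast
      rw [div_mul_eq_mul_div, mul_comm c, mul_div_assoc, mul_div_cancel_right₀ _ hcpos.ne']
      linarith
    calc ((n+1 : ℕ) : ℝ) ≤ (2/c) * (c * n) := h2
      _ ≤ (2/c) * maxMod f (n:ℝ) := by
          apply mul_le_mul_of_nonneg_left hMn (by positivity)
      _ ≤ max 1 (2/c) * maxMod f (n:ℝ) := by
          apply mul_le_mul_of_nonneg_right (le_max_right _ _)
          have := hMn
          nlinarith
  obtain ⟨ζ, C, hC, horb⟩ := ha (fun n => (n : ℝ))
    (fun n hn => by show (0:ℝ) < n; exact_mod_cast hn) tendsto_natCast_atTop_atTop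
    ⟨max 1 (2 / c), lt_max_of_lt_left one_pos, fun n hn => hlam n hn⟩
  -- choose the shift k
  obtain ⟨k, hk1, hkge⟩ : ∃ k : ℕ, 1 ≤ k ∧ 4 * C^2 / c ≤ (k:ℝ) :=
    ⟨max 1 ⌈4 * C^2 / c⌉₊, le_max_left _ _, le_trans (Nat.le_ceil _)
      (by exact_mod_cast Nat.cast_le.2 (le_max_right 1 _))⟩
  refine ⟨2 * C, by linarith, 1/2, by norm_num, by norm_num, fun n => f^[n + k] ζ, ?_, ?_⟩
  · -- tendsto
    apply tendsto_atTop_mono' atTop (by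
      filter_upwards [eventually_ge_atTop 1] with n hn
      have := (horb (n + k) (by omega)).1
      calc (n : ℝ) ≤ ((n + k : ℕ) : ℝ) := by exact_mod_cast Nat.le_add_right n k
        _ ≤ ‖f^[n + k] ζ‖ := this) tendsto_natCast_atTop_atTop
  · intro n hn
    set j : ℕ := n + k with hj
    have hj1 : 1 ≤ j := by omega
    have hlow : ((j:ℕ) : ℝ) ≤ ‖f^[j] ζ‖ := (horb j hj1).1
    have hupp : ‖f^[j+1] ζ‖ ≤ C * ((j+1 : ℕ) : ℝ) := (horb (j+1) (by omega)).2
    have hjpos : (0:ℝ) < (j:ℝ) := by exact_mod_cast hj1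
    have hCpos : (0:ℝ) < C := by linarith
    constructor
    · -- |x'(n+1)| ≤ 2C |x'(n)|
      show ‖f^[(n+1)+k] ζ‖ ≤ 2 * C * ‖f^[n+k] ζ‖
      rw [show (n+1)+k = j + 1 from by omega]
      calc ‖f^[j+1] ζ‖ ≤ C * ((j+1 : ℕ):ℝ) := hupp
        _ ≤ C * (2 * (j:ℝ)) := by
            apply mul_le_mul_of_nonneg_left _ hCpos.le
            have h1j : (1:ℝ) ≤ (j:ℝ) := by exact_mod_cast hj1
            push_cast; linarith
        _ = 2 * C * (j:ℝ) := by ring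
        _ ≤ 2 * C * ‖f^[j] ζ‖ := by
            apply mul_le_mul_of_nonneg_left hlow (by linarith)
    · -- |f(x'_n)| ≤ M(|x'_n|)^(1/2)
      have hfx : f (f^[j] ζ) = f^[j+1] ζ := (Function.iterate_succ_apply' f j ζ).symm
      rw [hfx]
      have habs : (j:ℝ) ≤ ‖f^[j] ζ‖ := hlow
      have hMmono : maxMod f (j:ℝ) ≤ maxMod f (‖f^[j] ζ‖) :=
        maxMod_mono hf hjpos habs
      have hM3 : c * (j:ℝ)^3 ≤ maxMod f (‖f^[j] ζ‖) := by
        calc c * (j:ℝ)^3 ≤ c * (j:ℝ)^m := by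
              apply mul_le_mul_of_nonneg_left _ hcpos.le
              exact pow_le_pow_right₀ (by exact_mod_cast hj1) hm3
          _ ≤ maxMod f (j:ℝ) := hgrow _ hjpos
          _ ≤ _ := hMmono
      have hkj : 4 * C^2 / c ≤ (j:ℝ) := by
        refine hkge.trans ?_
        exact_mod_cast Nat.cast_le.2 (by omega : k ≤ j)
      have hsq : (C * ((j+1:ℕ):ℝ))^2 ≤ maxMod f (‖f^[j] ζ‖) := by
        have h4 : 4 * C^2 ≤ c * (j:ℝ) := by
          rw [div_le_iff₀ hcpos] at hkj
          nlinarith [hkj]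
        have h1j : (1:ℝ) ≤ (j:ℝ) := by exact_mod_cast hj1
        have hj2 : (((j:ℕ):ℝ)+1)^2 ≤ 4 * (j:ℝ)^2 := by nlinarith [h1j]
        calc (C * ((j+1:ℕ):ℝ))^2 = C^2 * (((j:ℕ):ℝ)+1)^2 := by push_cast; ring
          _ ≤ C^2 * (4 * (j:ℝ)^2) := by
              apply mul_le_mul_of_nonneg_left hj2 (by positivity)
          _ = (4 * C^2) * (j:ℝ)^2 := by ring
          _ ≤ (c * (j:ℝ)) * (j:ℝ)^2 := by
              apply mul_le_mul_of_nonneg_right h4 (by positivity)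
          _ = c * (j:ℝ)^3 := by ring
          _ ≤ _ := hM3
      have hMnn : 0 ≤ maxMod f (‖f^[j] ζ‖) := maxMod_nonneg hf (norm_nonneg _)
      have hCj : 0 ≤ C * ((j+1:ℕ):ℝ) := by positivity
      calc ‖f^[j+1] ζ‖ ≤ C * ((j+1:ℕ):ℝ) := hupp
        _ = Real.sqrt ((C * ((j+1:ℕ):ℝ))^2) := (Real.sqrt_sq hCj).symm
        _ ≤ Real.sqrt (maxMod f (‖f^[j] ζ‖)) := Real.sqrt_le_sqrt hsq
        _ = maxMod f (‖f^[j] ζ‖) ^ (1/2 : ℝ) := Real.sqrt_eq_rpow _
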